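/- If 1/2 < H < 1, then ρ_1 + ρ_1^2ρ_3 + ρ_1ρ_2^2 - ρ_2ρ_3 - ρ_1^3 - ρ_1ρ_2 > ρ_1^2ρ_2 - ρ_2^3 + ρ_1ρ_2ρ_3 - ρ_1^2 + ρ_2 - ρ_1ρ_3; equivalently, the difference equals (ρ_1-ρ_2)(1+ρ_3)(1-ρ_2) + (ρ_1^2-ρ_2^2)(1-ρ_1-ρ_2+ρ_3) > 0, so that Γ_4^2 > Γ_4^3. -/

import Mathlib

/-- Strict subadditivity of `x ^ p` on positives for `0 < p < 1`. -/
lemma rpow_add_lt_rpow_add (p x y : ℝ) (hp0 : 0 < p) (hp1 : p < 1)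
    (hx : 0 < x) (hy : 0 < y) : (x + y) ^ p < x ^ p + y ^ p := by
  have hs : 0 < x + y := by linarith
  have hc := Real.strictConcaveOn_rpow hp0 hp1
  have h0 : (0:ℝ) ∈ Set.Ici (0:ℝ) := Set.mem_Ici.mpr le_rfl
  have hsmem : (x + y) ∈ Set.Ici (0:ℝ) := Set.mem_Ici.mpr hs.le
  have hax : 0 < x / (x + y) := by positivity
  have hay : 0 < y / (x + y) := by positivity
  have habx : x / (x + y) + y / (x + y) = 1 := by
    rw [← add_div, div_self hs.ne']
  have haby : y / (x + y) + x / (x + y) = 1 := by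
    rw [← add_div, add_comm, div_self hs.ne']
  have hX := hc.2 hsmem h0 (ne_of_gt hs) hax hay habx
  have hY := hc.2 hsmem h0 (ne_of_gt hs) hay hax haby
  simp only [smul_eq_mul, mul_zero, add_zero, Real.zero_rpow hp0.ne'] at hX hY
  have hxx : x / (x + y) * (x + y) = x := div_mul_cancel₀ x hs.ne'
  have hyy : y / (x + y) * (x + y) = y := div_mul_cancel₀ y hs.ne'
  rw [hxx] at hX
  rw [hyy] at hY
  calc (x + y) ^ p = x / (x + y) * (x + y) ^ p + y / (x + y) * (x + y) ^ p := by
        rw [← add_mul, habx, one_mul]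
    _ < x ^ p + y ^ p := add_lt_add hX hY

/-- Strict midpoint concavity of `x ^ p` at `1, 3` for `0 < p < 1`. -/
lemma one_add_three_rpow_lt (p : ℝ) (hp0 : 0 < p) (hp1 : p < 1) :
    1 + (3:ℝ) ^ p < 2 * (2:ℝ) ^ p := by
  have hc := (Real.strictConcaveOn_rpow hp0 hp1).2
    (show (1:ℝ) ∈ Set.Ici (0:ℝ) by norm_num)
    (show (3:ℝ) ∈ Set.Ici (0:ℝ) by norm_num)
    (show (1:ℝ) ≠ 3 by norm_num)
    (show (0:ℝ) < 1/2 by norm_num)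
    (show (0:ℝ) < 1/2 by norm_num)
    (show (1/2 : ℝ) + 1/2 = 1 by norm_num)
  simp only [smul_eq_mul, mul_one, Real.one_rpow] at hc
  norm_num at hc
  linarith

set_option maxHeartbeats 1000000 in
theorem gamma42_gt_gamma43 (H ρ₁ ρ₂ ρ₃ : ℝ) (hH : H ∈ Set.Ioo (1/2 : ℝ) 1)
    (h1 : ρ₁ = (1/2) * ((2:ℝ) ^ (2*H) - 2 * (1:ℝ) ^ (2*H) + (0:ℝ) ^ (2*H)))
    (h2 : ρ₂ = (1/2) * ((3:ℝ) ^ (2*H) - 2 * (2:ℝ) ^ (2*H) + (1:ℝ) ^ (2*H)))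
    (h3 : ρ₃ = (1/2) * ((4:ℝ) ^ (2*H) - 2 * (3:ℝ) ^ (2*H) + (2:ℝ) ^ (2*H))) :
    ((ρ₁ + ρ₁^2*ρ₃ + ρ₁*ρ₂^2 - ρ₂*ρ₃ - ρ₁^3 - ρ₁*ρ₂)
      - (ρ₁^2*ρ₂ - ρ₂^3 + ρ₁*ρ₂*ρ₃ - ρ₁^2 + ρ₂ - ρ₁*ρ₃)
      = (ρ₁-ρ₂)*(1+ρ₃)*(1-ρ₂) + (ρ₁^2-ρ₂^2)*(1-ρ₁-ρ₂+ρ₃)) ∧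
    ρ₁ + ρ₁^2*ρ₃ + ρ₁*ρ₂^2 - ρ₂*ρ₃ - ρ₁^3 - ρ₁*ρ₂
      > ρ₁^2*ρ₂ - ρ₂^3 + ρ₁*ρ₂*ρ₃ - ρ₁^2 + ρ₂ - ρ₁*ρ₃ ∧
    (ρ₁ + ρ₁^2*ρ₃ + ρ₁*ρ₂^2 - ρ₂*ρ₃ - ρ₁^3 - ρ₁*ρ₂) /
        (1 + 2*ρ₁^2*ρ₂ - ρ₂^2 - 2*ρ₁^2)
      > (ρ₁^2*ρ₂ - ρ₂^3 + ρ₁*ρ₂*ρ₃ - ρ₁^2 + ρ₂ - ρ₁*ρ₃) /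
        (1 + 2*ρ₁^2*ρ₂ - ρ₂^2 - 2*ρ₁^2) := by
  obtain ⟨hH1, hH2⟩ := hH
  have hH0 : 0 < H := by linarith
  set u : ℝ := (2:ℝ) ^ H with hu
  set v : ℝ := (3:ℝ) ^ H with hv
  have hu0 : 0 < u := Real.rpow_pos_of_pos (by norm_num) H
  have hv0 : 0 < v := Real.rpow_pos_of_pos (by norm_num) H
  have hu1 : 1 < u :=
    (Real.one_lt_rpow_iff_of_pos (by norm_num)).mpr (Or.inl ⟨by norm_num, hH0⟩)
  have hv1 : 1 < v :=
    (Real.one_lt_rpow_iff_of_pos (by norm_num)).mpr (Or.inl ⟨by norm_num, hH0⟩)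
  have hu2 : u < 2 := by
    have := Real.rpow_lt_rpow_of_exponent_lt (show (1:ℝ) < 2 by norm_num) hH2
    rwa [Real.rpow_one] at this
  have hsq : ∀ c : ℝ, 0 < c → c ^ (2*H) = (c ^ H) ^ 2 := by
    intro c hc
    rw [two_mul, Real.rpow_add hc, sq]
  have h2H : (2:ℝ) ^ (2*H) = u ^ 2 := hsq 2 (by norm_num)
  have h3H : (3:ℝ) ^ (2*H) = v ^ 2 := hsq 3 (by norm_num)
  have h4Hu : (4:ℝ) ^ H = u ^ 2 := by
    rw [show (4:ℝ) = 2 * 2 by norm_num, Real.mul_rpow (by norm_num) (by norm_num), hu, sq]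
  have h8Hu : (8:ℝ) ^ H = u ^ 3 := by
    rw [show (8:ℝ) = 2 * (2 * 2) by norm_num, Real.mul_rpow (by norm_num) (by norm_num),
      Real.mul_rpow (by norm_num) (by norm_num), hu]
    ring
  have h9Hv : (9:ℝ) ^ H = v ^ 2 := by
    rw [show (9:ℝ) = 3 * 3 by norm_num, Real.mul_rpow (by norm_num) (by norm_num), hv, sq]
  have h4H : (4:ℝ) ^ (2*H) = u ^ 4 := by
    rw [hsq 4 (by norm_num), h4Hu]; ring
  -- F1 : 4^H < 3^H + 1
  have F1 : u ^ 2 < v + 1 := by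
    have h := rpow_add_lt_rpow_add H 3 1 hH0 hH2 (by norm_num) (by norm_num)
    rw [Real.one_rpow, show (3:ℝ) + 1 = 4 by norm_num, h4Hu] at h
    rw [hv]; linarith
  -- F2 : 9^H < 8^H + 1
  have F2 : v ^ 2 < u ^ 3 + 1 := by
    have h := rpow_add_lt_rpow_add H 8 1 hH0 hH2 (by norm_num) (by norm_num)
    rw [Real.one_rpow, show (8:ℝ) + 1 = 9 by norm_num, h9Hv, h8Hu] at h
    linarith
  -- F3 : midpoint concavity with exponent 2H-1
  have F3 : 3 + v ^ 2 < 3 * u ^ 2 := by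
    have hm := one_add_three_rpow_lt (2*H - 1) (by linarith) (by linarith)
    have e2' : (2:ℝ) ^ (2*H - 1) = u ^ 2 / 2 := by
      rw [Real.rpow_sub (by norm_num), Real.rpow_one, h2H]
    have e3' : (3:ℝ) ^ (2*H - 1) = v ^ 2 / 3 := by
      rw [Real.rpow_sub (by norm_num), Real.rpow_one, h3H]
    rw [e2', e3'] at hm
    linarith
  -- explicit forms of the correlations
  have e1 : ρ₁ = (u ^ 2 - 2) / 2 := by
    rw [h1, h2H, Real.one_rpow, Real.zero_rpow (ne_of_gt (by linarith : (0:ℝ) < 2*H))]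
    ring
  have e2 : ρ₂ = (v ^ 2 - 2 * u ^ 2 + 1) / 2 := by
    rw [h2, h2H, h3H, Real.one_rpow]; ring
  have e3 : ρ₃ = (u ^ 4 - 2 * v ^ 2 + u ^ 2) / 2 := by
    rw [h3, h2H, h3H, h4H]; ring
  -- key inequalities
  have hu4 : u * u < 4 := by nlinarith [hu2, hu0]
  have husq : 1 < u * u := by nlinarith [hu1]
  have hvsq : 1 < v * v := by nlinarith [hv1]
  have h12 : ρ₂ < ρ₁ := by rw [e1, e2]; linarith
  have hBpos : 0 < (1 + ρ₁) * (1 + ρ₃) - (ρ₁ + ρ₂) ^ 2 := by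
    have hb1 : 0 < v ^ 2 - 1 := by rw [sq]; linarith
    have hb2 : v ^ 2 - 1 < u ^ 3 := by linarith
    have hu3 : 0 < u ^ 3 := by positivity
    have hkey : (v ^ 2 - 1) ^ 2 < (u ^ 3) ^ 2 := by
      calc (v ^ 2 - 1) ^ 2 = (v ^ 2 - 1) * (v ^ 2 - 1) := sq ((v:ℝ) ^ 2 - 1)
        _ < u ^ 3 * u ^ 3 := mul_lt_mul'' hb2 hb2 hb1.le hb1.le
        _ = (u ^ 3) ^ 2 := (sq ((u:ℝ) ^ 3)).symm
    have hquart : 4 * ((1 + ρ₁) * (1 + ρ₃) - (ρ₁ + ρ₂) ^ 2)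
        = (u ^ 3) ^ 2 - (v ^ 2 - 1) ^ 2 := by
      rw [e1, e2, e3]; ring
    linarith
  have hmain : ρ₁ + ρ₁^2*ρ₃ + ρ₁*ρ₂^2 - ρ₂*ρ₃ - ρ₁^3 - ρ₁*ρ₂
      > ρ₁^2*ρ₂ - ρ₂^3 + ρ₁*ρ₂*ρ₃ - ρ₁^2 + ρ₂ - ρ₁*ρ₃ := by
    have hfac : (ρ₁ + ρ₁^2*ρ₃ + ρ₁*ρ₂^2 - ρ₂*ρ₃ - ρ₁^3 - ρ₁*ρ₂)
        - (ρ₁^2*ρ₂ - ρ₂^3 + ρ₁*ρ₂*ρ₃ - ρ₁^2 + ρ₂ - ρ₁*ρ₃)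
        = (ρ₁ - ρ₂) * ((1 + ρ₁) * (1 + ρ₃) - (ρ₁ + ρ₂) ^ 2) := by ring
    linarith [hfac, mul_pos (sub_pos.mpr h12) hBpos]
  have hden : 0 < 1 + 2*ρ₁^2*ρ₂ - ρ₂^2 - 2*ρ₁^2 := by
    have hr1lt : ρ₁ < 1 := by rw [e1, sq]; linarith
    have hA : 0 < 1 - ρ₂ := by linarith
    have ha1 : 0 < u ^ 2 - 1 := by rw [sq]; linarith
    have hlt : u ^ 2 - 1 < v := by linarith
    have hb' : (u ^ 2 - 1) ^ 2 < v ^ 2 := by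
      calc (u ^ 2 - 1) ^ 2 = (u ^ 2 - 1) * (u ^ 2 - 1) := sq ((u:ℝ) ^ 2 - 1)
        _ < v * v := mul_lt_mul'' hlt hlt ha1.le ha1.le
        _ = v ^ 2 := (sq (v:ℝ)).symm
    have hB' : 0 < 1 + ρ₂ - 2 * ρ₁ ^ 2 := by
      have h2e : 2 * (1 + ρ₂ - 2 * ρ₁ ^ 2) = v ^ 2 - (u ^ 2 - 1) ^ 2 := by
        rw [e1, e2]; ring
      linarith
    have hfd : 1 + 2*ρ₁^2*ρ₂ - ρ₂^2 - 2*ρ₁^2 = (1 - ρ₂) * (1 + ρ₂ - 2 * ρ₁ ^ 2) := by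
      ring
    rw [hfd]
    exact mul_pos hA hB'
  exact ⟨by ring, hmain, div_lt_div_of_pos_right hmain hden⟩
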